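/- Let X be a topological space, φ : ℝ × X → X a continuous flow (φ_0 = id and φ_{s+t} = φ_s ∘ φ_t for all s, t ∈ ℝ), f : X → ℂ a bounded continuous function, and ω ∈ ℝ. Fix x ∈ X and suppose (1/T) ∫_0^T e^{i2πωτ} f(φ_τ(x)) dτ converges to a limit L ∈ ℂ as T → ∞. Then for every t ∈ ℝ, (1/T) ∫_0^T e^{i2πωτ} f(φ_τ(φ_t(x))) dτ converges to e^{-i2πωt} L as T → ∞. That is, the harmonic average f̃^{(ω)} satisfies U_t f̃^{(ω)} = e^{-i2πωt} f̃^{(ω)} along the orbit of x. -/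

import Mathlib

open Filter
open scoped Topology

/-- for a continuous flow `φ_t` and a bounded continuous observable `f`, if
the harmonic average at frequency `ω` converges along the orbit of `x` to `L`, then
starting from `φ_t(x)` it converges to `e^{-i2πωt} L`; i.e.
`U_t f̃^{(ω)} = e^{-i2πωt} f̃^{(ω)}` along the orbit of `x`. -/
theorem harmonic_average_koopman_eigenfunction_flow
    {X : Type*} [TopologicalSpace X] (φ : ℝ → X → X)
    (hφcont : Continuous fun p : ℝ × X => φ p.1 p.2)
    (hφ0 : φ 0 = id) (hφadd : ∀ s t : ℝ, φ (s + t) = φ s ∘ φ t)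
    (f : X → ℂ) (hfcont : Continuous f) (B : ℝ) (hfbdd : ∀ x, ‖f x‖ ≤ B)
    (ω : ℝ) (x : X) (L : ℂ)
    (hconv : Tendsto (fun T : ℝ => ((T : ℂ))⁻¹ *
        ∫ τ in (0 : ℝ)..T,
          Complex.exp (Complex.I * (2 * (Real.pi : ℂ) * (ω : ℂ) * (τ : ℂ))) * f (φ τ x))
      atTop (𝓝 L)) :
    ∀ t : ℝ,
      Tendsto (fun T : ℝ => ((T : ℂ))⁻¹ *
          ∫ τ in (0 : ℝ)..T,
            Complex.exp (Complex.I * (2 * (Real.pi : ℂ) * (ω : ℂ) * (τ : ℂ))) * f (φ τ (φ t x)))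
        atTop (𝓝 (Complex.exp (-(Complex.I * (2 * (Real.pi : ℂ) * (ω : ℂ) * (t : ℂ)))) * L)) := by
  intro t
  set g : ℝ → ℂ := fun τ =>
    Complex.exp (Complex.I * (2 * (Real.pi : ℂ) * (ω : ℂ) * (τ : ℂ))) * f (φ τ x) with hg
  have hgcont : Continuous g := by
    apply Continuous.mul
    · exact Complex.continuous_exp.comp (by continuity)
    · exact hfcont.comp (hφcont.comp (continuous_id.prodMk continuous_const))
  set c : ℂ := Complex.exp (-(Complex.I * (2 * (Real.pi : ℂ) * (ω : ℂ) * (t : ℂ)))) with hc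
  set C : ℂ := ∫ τ in (0:ℝ)..t, g τ with hC
  -- limit of (1/(T+t)) ∫_0^{T+t} g → L
  have h1 : Tendsto (fun T : ℝ => (((T + t : ℝ) : ℂ))⁻¹ * ∫ τ in (0:ℝ)..(T + t), g τ)
      atTop (𝓝 L) := hconv.comp (tendsto_atTop_add_const_right _ t tendsto_id)
  -- (T+t)/T → 1
  have h2 : Tendsto (fun T : ℝ => ((T : ℂ))⁻¹ * ((T + t : ℝ) : ℂ)) atTop (𝓝 1) := by
    have hr : Tendsto (fun T : ℝ => 1 + t * T⁻¹) atTop (𝓝 (1 + t * 0)) :=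
      tendsto_const_nhds.add (tendsto_inv_atTop_zero.const_mul t)
    rw [mul_zero, add_zero] at hr
    have := (Complex.continuous_ofReal.tendsto 1).comp hr
    apply this.congr'
    filter_upwards [eventually_gt_atTop (0:ℝ)] with T hT
    have hT0 : (T : ℂ) ≠ 0 := by exact_mod_cast hT.ne'
    rw [Function.comp_apply]
    push_cast
    field_simp
  have h3 : Tendsto (fun T : ℝ => ((T : ℂ))⁻¹) atTop (𝓝 0) := by
    have := (Complex.continuous_ofReal.tendsto 0).comp tendsto_inv_atTop_zero
    simpa [Function.comp_def] using this
  have hmain : Tendsto (fun T : ℝ =>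
      c * (((T : ℂ))⁻¹ * ((T + t : ℝ) : ℂ) *
        ((((T + t : ℝ) : ℂ))⁻¹ * ∫ τ in (0:ℝ)..(T + t), g τ)) - c * (((T : ℂ))⁻¹ * C))
      atTop (𝓝 (c * L)) := by
    have hconst : Tendsto (fun _ : ℝ => c) atTop (𝓝 c) := tendsto_const_nhds
    have hconstC : Tendsto (fun _ : ℝ => C) atTop (𝓝 C) := tendsto_const_nhds
    have := (hconst.mul (h2.mul h1)).sub (hconst.mul (h3.mul hconstC))
    simpa using this
  apply hmain.congr'
  filter_upwards [eventually_gt_atTop (0:ℝ), eventually_gt_atTop (-t)] with T hT hTt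
  have hT0 : (T : ℂ) ≠ 0 := by exact_mod_cast hT.ne'
  have hTt0 : ((T + t : ℝ) : ℂ) ≠ 0 := by
    have : T + t ≠ 0 := by linarith
    exact_mod_cast this
  -- rewrite the integrand
  have hint : (∫ τ in (0:ℝ)..T,
      Complex.exp (Complex.I * (2 * (Real.pi : ℂ) * (ω : ℂ) * (τ : ℂ))) * f (φ τ (φ t x)))
      = c * ∫ τ in (0:ℝ)..T, g (τ + t) := by
    rw [← intervalIntegral.integral_const_mul]
    apply intervalIntegral.integral_congr
    intro τ _
    dsimp only
    have hφ : φ τ (φ t x) = φ (τ + t) x := by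
      rw [hφadd τ t]; rfl
    have key : Complex.exp (Complex.I * (2 * (Real.pi : ℂ) * (ω : ℂ) * ((τ : ℂ) + (t : ℂ))))
        = Complex.exp (Complex.I * (2 * (Real.pi : ℂ) * (ω : ℂ) * (τ : ℂ)))
          * Complex.exp (Complex.I * (2 * (Real.pi : ℂ) * (ω : ℂ) * (t : ℂ))) := by
      rw [← Complex.exp_add]
      congr 1
      ring
    rw [hφ, hg]
    push_cast
    rw [key, hc, Complex.exp_neg]
    have hne := Complex.exp_ne_zero (Complex.I * (2 * (Real.pi : ℂ) * (ω : ℂ) * (t : ℂ)))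
    field_simp
  have hshift : (∫ τ in (0:ℝ)..T, g (τ + t)) = ∫ τ in t..(T + t), g τ := by
    simpa using intervalIntegral.integral_comp_add_right (a := (0:ℝ)) (b := T) g t
  have hsplit : (∫ τ in t..(T + t), g τ)
      = (∫ τ in (0:ℝ)..(T + t), g τ) - C := by
    rw [hC]
    rw [← intervalIntegral.integral_interval_sub_left
      (hgcont.intervalIntegrable 0 (T + t)) (hgcont.intervalIntegrable 0 t)]
  have hcancel : ((T : ℂ))⁻¹ * ((T + t : ℝ) : ℂ) *
      ((((T + t : ℝ) : ℂ))⁻¹ * ∫ τ in (0:ℝ)..(T + t), g τ)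
      = ((T : ℂ))⁻¹ * ∫ τ in (0:ℝ)..(T + t), g τ := by
    rw [mul_assoc, ← mul_assoc (((T + t : ℝ) : ℂ)), mul_inv_cancel₀ hTt0, one_mul]
  rw [hint, hshift, hsplit, hcancel]
  ring
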